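/- arXiv:1303.4116 — 2 statements merged into one kernel-verified Lean document; each statement's English description precedes it below -/
import Mathlib

section
/- For the matrices A = [[0,2,0],[1,-1,0],[1,-1,0]], B = [[-1,0,0],[0,0,0],[0,0,-1]], C = [[0,0,0],[0,-1,0],[0,0,1]], and λ ∈ ℂ with λ ∉ {0, 1, -8} and η = √(λ² + 8λ) ≠ 0, set D_λ = -λB - C = diag(λ, 1, λ-1). Then with P = [[(λ-η)/(4λ),1,0],[(λ+η)/(4λ),1,0],[0,1/(1-λ),1/(λ-1)]] and Q = [[4λ/((λ+η)η), -4λ/((λ-η)η), 0],[-λ/η, λ/η, 0],[-λ/(η(λ-1)), λ/(η(λ-1)), 1]], one has P A Q = diag(1,1,0) and P D_λ Q = diag(2λ/(-λ-η), 2λ/(-λ+η), 1). In particular the pencil {D_λ + μA} is regular of index 1. -/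
open Matrix

set_option maxHeartbeats 2000000

/-- Weierstrass–Kronecker decomposition of the index-1 pencil from
Example 2: P A Q = diag(1,1,0), P D_λ Q = diag(2λ/(-λ-η), 2λ/(-λ+η), 1), where
η² = λ² + 8λ, λ ∉ {0,1,-8}, η ≠ 0; hence {D_λ + μA} is regular of index 1. -/
theorem example2_WK_decomposition_index1
    (lam η : ℂ) (h0 : lam ≠ 0) (h1 : lam ≠ 1) (h8 : lam ≠ -8)
    (hη : η ^ 2 = lam ^ 2 + 8 * lam) (hη0 : η ≠ 0)
    (A B C D P Q : Matrix (Fin 3) (Fin 3) ℂ)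
    (hA : A = !![0, 2, 0; 1, -1, 0; 1, -1, 0])
    (hB : B = !![-1, 0, 0; 0, 0, 0; 0, 0, -1])
    (hC : C = !![0, 0, 0; 0, -1, 0; 0, 0, 1])
    (hD : D = -lam • B - C)
    (hP : P = !![(lam - η) / (4 * lam), 1, 0;
                 (lam + η) / (4 * lam), 1, 0;
                 0, 1 / (1 - lam), 1 / (lam - 1)])
    (hQ : Q = !![4 * lam / ((lam + η) * η), -(4 * lam) / ((lam - η) * η), 0;
                 -lam / η, lam / η, 0;
                 -lam / (η * (lam - 1)), lam / (η * (lam - 1)), 1]) :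
    D = Matrix.diagonal ![lam, 1, lam - 1] ∧
    IsUnit P.det ∧ IsUnit Q.det ∧
    P * A * Q = Matrix.diagonal ![1, 1, 0] ∧
    P * D * Q = Matrix.diagonal ![2 * lam / (-lam - η), 2 * lam / (-lam + η), 1] ∧
    (∃ μ : ℂ, (D + μ • A).det ≠ 0) := by
  have h1' : lam - 1 ≠ 0 := sub_ne_zero.mpr h1
  have h1'' : (1:ℂ) - lam ≠ 0 := sub_ne_zero.mpr (Ne.symm h1)
  have hprod : (lam + η) * (lam - η) = -8 * lam := by linear_combination -hη
  have h8lam : (-8:ℂ) * lam ≠ 0 := mul_ne_zero (by norm_num) h0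
  have hpe : lam + η ≠ 0 := left_ne_zero_of_mul (hprod ▸ h8lam)
  have hme : lam - η ≠ 0 := right_ne_zero_of_mul (hprod ▸ h8lam)
  have hpe2 : -lam - η ≠ 0 := fun h => hpe (by linear_combination -h)
  have hme2 : -lam + η ≠ 0 := fun h => hme (by linear_combination -h)
  have hDdiag : D = Matrix.diagonal ![lam, 1, lam - 1] := by
    subst hD hB hC
    ext i j
    fin_cases i <;> fin_cases j <;>
      simp [Matrix.diagonal, Matrix.vecHead, Matrix.vecTail] <;> ring
  have hDex : D = !![lam, 0, 0; 0, 1, 0; 0, 0, lam - 1] := by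
    rw [hDdiag]; ext i j
    fin_cases i <;> fin_cases j <;>
      simp [Matrix.diagonal, Matrix.vecHead, Matrix.vecTail]
  have hdiag1 : Matrix.diagonal ![(1:ℂ), 1, 0] = !![1, 0, 0; 0, 1, 0; 0, 0, 0] := by
    ext i j
    fin_cases i <;> fin_cases j <;>
      simp [Matrix.diagonal, Matrix.vecHead, Matrix.vecTail]
  have hdiag2 : Matrix.diagonal ![2 * lam / (-lam - η), 2 * lam / (-lam + η), (1:ℂ)]
      = !![2 * lam / (-lam - η), 0, 0; 0, 2 * lam / (-lam + η), 0; 0, 0, 1] := by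
    ext i j
    fin_cases i <;> fin_cases j <;>
      simp [Matrix.diagonal, Matrix.vecHead, Matrix.vecTail]
  have hPdet : P.det = -η / (2 * lam * (lam - 1)) := by
    rw [hP, Matrix.det_fin_three]
    simp [Matrix.vecHead, Matrix.vecTail]
    field_simp
    ring
  have hQdet : Q.det = lam / η := by
    rw [hQ, Matrix.det_fin_three]
    simp [Matrix.vecHead, Matrix.vecTail]
    field_simp
    linear_combination η * hη
  refine ⟨hDdiag, ?_, ?_, ?_, ?_, ⟨0, ?_⟩⟩
  · rw [hPdet]
    exact isUnit_iff_ne_zero.mpr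
      (div_ne_zero (neg_ne_zero.mpr hη0)
        (mul_ne_zero (mul_ne_zero two_ne_zero h0) h1'))
  · rw [hQdet]
    exact isUnit_iff_ne_zero.mpr (div_ne_zero h0 hη0)
  · rw [hP, hA, hQ, hdiag1]
    ext i j
    fin_cases i <;> fin_cases j <;>
      simp [Matrix.mul_apply, Fin.sum_univ_succ, Matrix.vecHead, Matrix.vecTail] <;>
      field_simp <;>
      first
        | ring1
        | linear_combination (2 * lam * η) * hη
        | linear_combination (-2 * lam * η) * hη
        | linear_combination (-2) * hη
        | linear_combination 2 * hη
  · rw [hP, hDex, hQ, hdiag2]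
    ext i j
    fin_cases i <;> fin_cases j <;>
      simp [Matrix.mul_apply, Fin.sum_univ_succ, Matrix.vecHead, Matrix.vecTail] <;>
      field_simp <;>
      first
        | ring1
        | linear_combination (2 * lam * η) * hη
        | linear_combination (-2 * lam * η) * hη
  · rw [hDex]
    simp only [zero_smul, add_zero]
    rw [Matrix.det_fin_three]
    simp [Matrix.vecHead, Matrix.vecTail]
    exact ⟨h0, h1'⟩
end

section
/- Consider the coil pencil: for λ ∈ ℂ with λ ∉ {0,1}, A = [[0,0,0,0],[0,0,-a,b],[1,0,0,0],[0,1,0,0]] specialized to a = b = 1 (i.e., LC/l² = L/D = 1), B' = diag(1,1,0,0) matrices as in equation (2) with D_λ = diag-type matrix [[λ,-1,0,0],[0,λ,0,0],[0,0,1,0],[0,0,0,1]]. With P and Q as given (depending on λ and √(1-λ)), one has P A Q = diag(J, N₂')-form [[1,0,0,0],[0,1,0,0],[0,0,0,1],[0,0,0,0]] and P D_λ Q = diag(-iλ/√(1-λ), iλ/√(1-λ), 1, 1). Hence the pencil {D_λ + μA} is regular of index 2 for all such λ. -/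
open Matrix Complex

set_option maxHeartbeats 1000000 in
/-- Auxiliary polynomial identity: scaled P times A times scaled Q. -/
lemma coil_aux_PAQ (μ : ℂ) :
    !![-(I * (1 - μ ^ 2)), -(I * μ ^ 2), μ * (1 - μ ^ 2), -(μ * (1 - μ ^ 2));
         I * (1 - μ ^ 2), I * μ ^ 2, μ * (1 - μ ^ 2), -(μ * (1 - μ ^ 2));
         0, 0, μ * (1 - μ ^ 2), -μ;
         μ, 0, 0, 0] *
      !![0, 0, 0, 0; 0, 0, -1, 1; 1, 0, 0, 0; 0, 1, 0, 0] *
      !![μ, μ, 0, -(2 * μ * (1 - μ ^ 2));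
         μ * (1 - μ ^ 2), μ * (1 - μ ^ 2), 0, -(2 * μ * (1 - μ ^ 2));
         -(I * (1 - μ ^ 2)), I * (1 - μ ^ 2), -(2 * μ * (1 - μ ^ 2)), 0;
         -(I * (1 - μ ^ 2) ^ 2), I * (1 - μ ^ 2) ^ 2, -(2 * μ * (1 - μ ^ 2)), 0] =
      (μ * (1 - μ ^ 2) * (2 * μ ^ 3)) •
      !![1, 0, 0, 0; 0, 1, 0, 0; 0, 0, 0, 1; 0, 0, 0, 0] := by
  ext i j
  fin_cases i <;> fin_cases j <;>
    · try simp [Matrix.mul_apply, Fin.sum_univ_four, Matrix.smul_apply, smul_eq_mul,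
        Matrix.vecHead, Matrix.vecTail]
      try ring_nf
      try simp [Complex.I_sq]
      try ring_nf

set_option maxHeartbeats 1000000 in
/-- Auxiliary polynomial identity: scaled P times D times scaled Q. -/
lemma coil_aux_PDQ (μ : ℂ) (hμ0 : μ ≠ 0) :
    !![-(I * (1 - μ ^ 2)), -(I * μ ^ 2), μ * (1 - μ ^ 2), -(μ * (1 - μ ^ 2));
         I * (1 - μ ^ 2), I * μ ^ 2, μ * (1 - μ ^ 2), -(μ * (1 - μ ^ 2));
         0, 0, μ * (1 - μ ^ 2), -μ;
         μ, 0, 0, 0] *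
      !![1 - μ ^ 2, -1, 0, 0; 0, 1 - μ ^ 2, 0, 0; 0, 0, 1, 0; 0, 0, 0, 1] *
      !![μ, μ, 0, -(2 * μ * (1 - μ ^ 2));
         μ * (1 - μ ^ 2), μ * (1 - μ ^ 2), 0, -(2 * μ * (1 - μ ^ 2));
         -(I * (1 - μ ^ 2)), I * (1 - μ ^ 2), -(2 * μ * (1 - μ ^ 2)), 0;
         -(I * (1 - μ ^ 2) ^ 2), I * (1 - μ ^ 2) ^ 2, -(2 * μ * (1 - μ ^ 2)), 0] =
      (μ * (1 - μ ^ 2) * (2 * μ ^ 3)) •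
      Matrix.diagonal ![-I * (1 - μ ^ 2) / μ, I * (1 - μ ^ 2) / μ, 1, 1] := by
  ext i j
  fin_cases i <;> fin_cases j <;>
    · try simp [Matrix.mul_apply, Fin.sum_univ_four, Matrix.smul_apply, smul_eq_mul,
        Matrix.diagonal, Matrix.vecHead, Matrix.vecTail]
      try field_simp
      try ring_nf
      try simp [Complex.I_sq]
      try ring_nf

set_option maxHeartbeats 2000000 in
/-- Weierstrass–Kronecker decomposition of the superconducting-coil
pencil (normalized parameters): with μ a fixed square root of 1-λ, λ ∉ {0,1},
P A Q = diag(I₂, N₂) and P D_λ Q = diag(-iλ/μ, iλ/μ, 1, 1); hence the pencil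
{D_λ + νA} is regular of index 2. -/
theorem coil_WK_decomposition_index2
    (lam μ : ℂ) (h0 : lam ≠ 0) (h1 : lam ≠ 1)
    (hμ : μ ^ 2 = 1 - lam) (hμ0 : μ ≠ 0)
    (A D P Q : Matrix (Fin 4) (Fin 4) ℂ)
    (hA : A = !![0, 0, 0, 0; 0, 0, -1, 1; 1, 0, 0, 0; 0, 1, 0, 0])
    (hD : D = !![lam, -1, 0, 0; 0, lam, 0, 0; 0, 0, 1, 0; 0, 0, 0, 1])
    (hP : P = !![-I / μ, -I * μ / lam, 1, -1;
                 I / μ, I * μ / lam, 1, -1;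
                 0, 0, 1, -1 / lam;
                 1 / lam, 0, 0, 0])
    (hQ : Q = !![1 / (2 * (1 - lam)), 1 / (2 * (1 - lam)), 0, -lam / (1 - lam);
                 lam / (2 * (1 - lam)), lam / (2 * (1 - lam)), 0, -lam / (1 - lam);
                 -I * lam / (2 * μ ^ 3), I * lam / (2 * μ ^ 3), -lam / (1 - lam), 0;
                 -I * lam ^ 2 / (2 * μ ^ 3), I * lam ^ 2 / (2 * μ ^ 3),
                   -lam / (1 - lam), 0]) :
    IsUnit P.det ∧ IsUnit Q.det ∧
    P * A * Q = !![1, 0, 0, 0; 0, 1, 0, 0; 0, 0, 0, 1; 0, 0, 0, 0] ∧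
    P * D * Q = Matrix.diagonal ![-I * lam / μ, I * lam / μ, 1, 1] ∧
    (∃ ν : ℂ, (D + ν • A).det ≠ 0) ∧
    !![(0 : ℂ), 1; 0, 0] ^ 2 = 0 := by
  have hl : lam = 1 - μ ^ 2 := by linear_combination hμ
  subst hA hD hP hQ hl
  have h0' : (1 : ℂ) - μ ^ 2 ≠ 0 := h0
  have ha0 : μ * (1 - μ ^ 2) ≠ 0 := mul_ne_zero hμ0 h0'
  have hb0 : (2 : ℂ) * μ ^ 3 ≠ 0 := mul_ne_zero two_ne_zero (pow_ne_zero _ hμ0)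
  have hP2 : (μ * (1 - μ ^ 2)) • (!![-I / μ, -I * μ / (1 - μ ^ 2), 1, -1;
                 I / μ, I * μ / (1 - μ ^ 2), 1, -1;
                 0, 0, 1, -1 / (1 - μ ^ 2);
                 1 / (1 - μ ^ 2), 0, 0, 0] : Matrix (Fin 4) (Fin 4) ℂ) =
      !![-(I * (1 - μ ^ 2)), -(I * μ ^ 2), μ * (1 - μ ^ 2), -(μ * (1 - μ ^ 2));
         I * (1 - μ ^ 2), I * μ ^ 2, μ * (1 - μ ^ 2), -(μ * (1 - μ ^ 2));
         0, 0, μ * (1 - μ ^ 2), -μ;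
         μ, 0, 0, 0] := by
    ext i j
    fin_cases i <;> fin_cases j <;>
      · try simp [Matrix.vecHead, Matrix.vecTail]
        try field_simp
        try ring
  have hQ2 : ((2 : ℂ) * μ ^ 3) • (!![1 / (2 * (1 - (1 - μ ^ 2))),
            1 / (2 * (1 - (1 - μ ^ 2))), 0, -(1 - μ ^ 2) / (1 - (1 - μ ^ 2));
         (1 - μ ^ 2) / (2 * (1 - (1 - μ ^ 2))), (1 - μ ^ 2) / (2 * (1 - (1 - μ ^ 2))),
            0, -(1 - μ ^ 2) / (1 - (1 - μ ^ 2));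
         -I * (1 - μ ^ 2) / (2 * μ ^ 3), I * (1 - μ ^ 2) / (2 * μ ^ 3),
            -(1 - μ ^ 2) / (1 - (1 - μ ^ 2)), 0;
         -I * (1 - μ ^ 2) ^ 2 / (2 * μ ^ 3), I * (1 - μ ^ 2) ^ 2 / (2 * μ ^ 3),
            -(1 - μ ^ 2) / (1 - (1 - μ ^ 2)), 0] : Matrix (Fin 4) (Fin 4) ℂ) =
      !![μ, μ, 0, -(2 * μ * (1 - μ ^ 2));
         μ * (1 - μ ^ 2), μ * (1 - μ ^ 2), 0, -(2 * μ * (1 - μ ^ 2));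
         -(I * (1 - μ ^ 2)), I * (1 - μ ^ 2), -(2 * μ * (1 - μ ^ 2)), 0;
         -(I * (1 - μ ^ 2) ^ 2), I * (1 - μ ^ 2) ^ 2, -(2 * μ * (1 - μ ^ 2)), 0] := by
    ext i j
    fin_cases i <;> fin_cases j <;>
      · try simp [Matrix.vecHead, Matrix.vecTail]
        try field_simp
        try ring
  have hPe := (inv_smul_eq_iff₀ ha0).2 hP2.symm
  have hQe := (inv_smul_eq_iff₀ hb0).2 hQ2.symm
  rw [← hPe, ← hQe]
  have hmain : ∀ (M T : Matrix (Fin 4) (Fin 4) ℂ),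
      (!![-(I * (1 - μ ^ 2)), -(I * μ ^ 2), μ * (1 - μ ^ 2), -(μ * (1 - μ ^ 2));
         I * (1 - μ ^ 2), I * μ ^ 2, μ * (1 - μ ^ 2), -(μ * (1 - μ ^ 2));
         0, 0, μ * (1 - μ ^ 2), -μ;
         μ, 0, 0, 0] : Matrix (Fin 4) (Fin 4) ℂ) * M *
      !![μ, μ, 0, -(2 * μ * (1 - μ ^ 2));
         μ * (1 - μ ^ 2), μ * (1 - μ ^ 2), 0, -(2 * μ * (1 - μ ^ 2));
         -(I * (1 - μ ^ 2)), I * (1 - μ ^ 2), -(2 * μ * (1 - μ ^ 2)), 0;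
         -(I * (1 - μ ^ 2) ^ 2), I * (1 - μ ^ 2) ^ 2, -(2 * μ * (1 - μ ^ 2)), 0]
        = (μ * (1 - μ ^ 2) * (2 * μ ^ 3)) • T →
      ((μ * (1 - μ ^ 2))⁻¹ •
        (!![-(I * (1 - μ ^ 2)), -(I * μ ^ 2), μ * (1 - μ ^ 2), -(μ * (1 - μ ^ 2));
         I * (1 - μ ^ 2), I * μ ^ 2, μ * (1 - μ ^ 2), -(μ * (1 - μ ^ 2));
         0, 0, μ * (1 - μ ^ 2), -μ;
         μ, 0, 0, 0] : Matrix (Fin 4) (Fin 4) ℂ)) * M *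
      (((2 : ℂ) * μ ^ 3)⁻¹ •
        (!![μ, μ, 0, -(2 * μ * (1 - μ ^ 2));
         μ * (1 - μ ^ 2), μ * (1 - μ ^ 2), 0, -(2 * μ * (1 - μ ^ 2));
         -(I * (1 - μ ^ 2)), I * (1 - μ ^ 2), -(2 * μ * (1 - μ ^ 2)), 0;
         -(I * (1 - μ ^ 2) ^ 2), I * (1 - μ ^ 2) ^ 2, -(2 * μ * (1 - μ ^ 2)), 0] :
          Matrix (Fin 4) (Fin 4) ℂ)) = T := by
    intro M T h
    rw [smul_mul_assoc, smul_mul_assoc, mul_smul_comm, h, smul_smul, smul_smul]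
    convert one_smul ℂ T using 2
    field_simp
  have hPAQ := hmain _ _ (coil_aux_PAQ μ)
  have hPDQ := hmain _ _ (coil_aux_PDQ μ hμ0)
  have hDdet : (!![1 - μ ^ 2, -1, 0, 0; 0, 1 - μ ^ 2, 0, 0; 0, 0, 1, 0;
      0, 0, 0, (1 : ℂ)]).det = (1 - μ ^ 2) ^ 2 := by
    simp [Matrix.det_succ_row_zero, Fin.sum_univ_succ]
    ring
  have hdiagdet : (Matrix.diagonal
      ![-I * (1 - μ ^ 2) / μ, I * (1 - μ ^ 2) / μ, 1, (1 : ℂ)]).det ≠ 0 := by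
    rw [Matrix.det_diagonal, Fin.prod_univ_four]
    simp only [Matrix.cons_val_zero, Matrix.cons_val_one, Matrix.head_cons]
    have e1 : -I * (1 - μ ^ 2) / μ ≠ 0 :=
      div_ne_zero (mul_ne_zero (neg_ne_zero.2 I_ne_zero) h0') hμ0
    have e2 : I * (1 - μ ^ 2) / μ ≠ 0 :=
      div_ne_zero (mul_ne_zero I_ne_zero h0') hμ0
    exact mul_ne_zero (mul_ne_zero (mul_ne_zero e1 e2) one_ne_zero) one_ne_zero
  have hprodne : (((μ * (1 - μ ^ 2))⁻¹ •
      (!![-(I * (1 - μ ^ 2)), -(I * μ ^ 2), μ * (1 - μ ^ 2), -(μ * (1 - μ ^ 2));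
         I * (1 - μ ^ 2), I * μ ^ 2, μ * (1 - μ ^ 2), -(μ * (1 - μ ^ 2));
         0, 0, μ * (1 - μ ^ 2), -μ;
         μ, 0, 0, 0] : Matrix (Fin 4) (Fin 4) ℂ))).det *
      (!![1 - μ ^ 2, -1, 0, 0; 0, 1 - μ ^ 2, 0, 0; 0, 0, 1, 0;
        0, 0, 0, (1 : ℂ)]).det *
      ((((2 : ℂ) * μ ^ 3)⁻¹ •
      (!![μ, μ, 0, -(2 * μ * (1 - μ ^ 2));
         μ * (1 - μ ^ 2), μ * (1 - μ ^ 2), 0, -(2 * μ * (1 - μ ^ 2));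
         -(I * (1 - μ ^ 2)), I * (1 - μ ^ 2), -(2 * μ * (1 - μ ^ 2)), 0;
         -(I * (1 - μ ^ 2) ^ 2), I * (1 - μ ^ 2) ^ 2, -(2 * μ * (1 - μ ^ 2)), 0] :
        Matrix (Fin 4) (Fin 4) ℂ))).det ≠ 0 := by
    rw [← Matrix.det_mul, ← Matrix.det_mul, hPDQ]
    exact hdiagdet
  refine ⟨?_, ?_, hPAQ, hPDQ, ⟨0, ?_⟩, ?_⟩
  · rw [isUnit_iff_ne_zero]
    intro h
    rw [h] at hprodne
    simp at hprodne
  · rw [isUnit_iff_ne_zero]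
    intro h
    rw [h] at hprodne
    simp at hprodne
  · rw [zero_smul, add_zero, hDdet]
    exact pow_ne_zero _ h0'
  · ext i j
    fin_cases i <;> fin_cases j <;>
      simp [pow_two, Matrix.mul_apply, Fin.sum_univ_two]
end
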